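/- (Theorem 3.1, energy part.) Let N ∈ ℕ, let L : ℂ^N → ℂ^N be a Hermitian (self-adjoint) linear map, β ∈ ℝ, C₀ > 0, ρ(ψ) = √(Σ_j |ψ_j|⁴ + C₀), τ > 0. Let a : Fin s → Fin s → ℝ, b : Fin s → ℝ satisfy b i * a i j + b j * a j i = b i * b j for all i, j, and set c i = Σ_j a i j. Given ψⁿ ∈ ℂ^N and qⁿ ∈ ℝ, suppose the stage values Ψ : Fin s → ℂ^N and Q : Fin s → ℝ satisfy Ψ i = exp(−i c i τ L) ψⁿ + τ Σ_j a i j • (exp(i (c j − c i) τ L) (k j)) and Q i = qⁿ + τ Σ_j a i j * l j, where k i = −i (β Q i / ρ(Ψ i)) • (|Ψ i|²Ψ i) and l i = (2 / ρ(Ψ i)) * Re⟨−i (L (Ψ i)), |Ψ i|²(Ψ i)⟩. Define ψⁿ⁺¹ = exp(−i τ L) ψⁿ + τ Σ_i b i • (exp(−i (1 − c i) τ L) (k i)) and qⁿ⁺¹ = qⁿ + τ Σ_i b i * l i. Then Re⟨L ψⁿ⁺¹, ψⁿ⁺¹⟩ + (β/2) (qⁿ⁺¹)² = Re⟨L ψⁿ,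 ψⁿ⟩ + (β/2) (qⁿ)², i.e. the step preserves the discrete modified energy Eⁿ = ⟨Lψⁿ, ψⁿ⟩ + (β/2)(qⁿ)² − (β/2)C₀. -/

import Mathlib

open Finset Complex

/-- The componentwise cubic nonlinearity `|ψ|²ψ`. -/
noncomputable def nlVec {N : ℕ} (ψ : EuclideanSpace ℂ (Fin N)) : EuclideanSpace ℂ (Fin N) :=
  WithLp.toLp 2 (fun j => (‖ψ j‖ : ℂ) ^ 2 * ψ j)

/-- The inner product `⟨x, y⟩ = ∑ j, x j * conj (y j)` of the paper. -/
noncomputable def pInner {N : ℕ} (x y : EuclideanSpace ℂ (Fin N)) : ℂ :=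
  ∑ j, x j * (starRingEnd ℂ) (y j)

/-- The SAV denominator `ρ(ψ) = √(∑ j |ψ j|⁴ + C₀)`. -/
noncomputable def savRho {N : ℕ} (C₀ : ℝ) (ψ : EuclideanSpace ℂ (Fin N)) : ℝ :=
  Real.sqrt ((∑ j, ‖ψ j‖ ^ 4) + C₀)

section Aux

local notation "⟪" x ", " y "⟫" => @inner ℂ _ _ x y

lemma pInner_eq_inner {N : ℕ} (x y : EuclideanSpace ℂ (Fin N)) :
    pInner x y = ⟪y, x⟫ := by
  simp only [pInner, PiLp.inner_apply, RCLike.inner_apply]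

lemma real_smul_eq {N : ℕ} (r : ℝ) (x : EuclideanSpace ℂ (Fin N)) :
    r • x = ((r : ℂ)) • x := by
  exact (RCLike.real_smul_eq_coe_smul (K := ℂ) r x)

variable {N : ℕ} (L : EuclideanSpace ℂ (Fin N) →L[ℂ] EuclideanSpace ℂ (Fin N))

lemma re_swap (hsym : ∀ x y : EuclideanSpace ℂ (Fin N), ⟪L x, y⟫ = ⟪x, L y⟫)
    (x y : EuclideanSpace ℂ (Fin N)) : (⟪x, L y⟫).re = (⟪y, L x⟫).re := by
  rw [← hsym, ← inner_conj_symm]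
  exact Complex.conj_re _

/-- Linear expansion of the inner product against an RK-type combination. -/
lemma expand_lin {s : ℕ} (x φ : EuclideanSpace ℂ (Fin N)) (τ : ℝ)
    (coef : Fin s → ℝ) (F : Fin s → EuclideanSpace ℂ (Fin N)) :
    (⟪x, L (φ + τ • ∑ j, coef j • F j)⟫).re
      = (⟪x, L φ⟫).re + τ * ∑ j, coef j * (⟪x, L (F j)⟫).re := by
  simp only [real_smul_eq, map_add, map_smul, map_sum, inner_add_right, inner_smul_right,
    inner_sum, Complex.add_re, Complex.re_ofReal_mul, Complex.re_sum]

lemma expand_quad {s : ℕ}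
    (hsym : ∀ x y : EuclideanSpace ℂ (Fin N), ⟪L x, y⟫ = ⟪x, L y⟫)
    (φ : EuclideanSpace ℂ (Fin N)) (τ : ℝ)
    (coef : Fin s → ℝ) (F : Fin s → EuclideanSpace ℂ (Fin N)) :
    (⟪φ + τ • ∑ i, coef i • F i, L (φ + τ • ∑ i, coef i • F i)⟫).re
      = (⟪φ, L φ⟫).re + 2 * τ * ∑ i, coef i * (⟪F i, L φ⟫).re
        + τ ^ 2 * ∑ i, ∑ j, coef i * coef j * (⟪F i, L (F j)⟫).re := by
  have key : ∀ x : EuclideanSpace ℂ (Fin N),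
      (⟪x, L (φ + τ • ∑ j, coef j • F j)⟫).re
        = (⟪x, L φ⟫).re + τ * ∑ j, coef j * (⟪x, L (F j)⟫).re :=
    fun x => expand_lin L x φ τ coef F
  rw [inner_add_left, Complex.add_re, key φ]
  have h2 : (⟪τ • ∑ i, coef i • F i, L (φ + τ • ∑ i, coef i • F i)⟫).re
      = τ * ∑ i, coef i * (⟪F i, L (φ + τ • ∑ j, coef j • F j)⟫).re := by
    simp only [real_smul_eq, inner_smul_left, sum_inner, Complex.conj_ofReal,
      Complex.re_ofReal_mul, Complex.re_sum]
  rw [h2]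
  have h3 : ∀ i, (⟪F i, L (φ + τ • ∑ j, coef j • F j)⟫).re
      = (⟪F i, L φ⟫).re + τ * ∑ j, coef j * (⟪F i, L (F j)⟫).re := fun i => key (F i)
  have h4 : ∀ i, (⟪φ, L (F i)⟫).re = (⟪F i, L φ⟫).re := fun i => re_swap L hsym φ (F i)
  simp only [h3, h4]
  have hT : ∑ i, coef i * ((⟪F i, L φ⟫).re + τ * ∑ j, coef j * (⟪F i, L (F j)⟫).re)
      = ∑ i, coef i * (⟪F i, L φ⟫).re
        + τ * ∑ i, ∑ j, coef i * coef j * (⟪F i, L (F j)⟫).re := by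
    simp only [mul_add, Finset.mul_sum, Finset.sum_add_distrib]
    congr 1
    exact Finset.sum_congr rfl fun i _ => Finset.sum_congr rfl fun j _ => by ring
  rw [hT]
  ring


/-- The free-flow propagator `exp(−i r τ L)`. -/
noncomputable def flowU (τ r : ℝ) : EuclideanSpace ℂ (Fin N) →L[ℂ] EuclideanSpace ℂ (Fin N) :=
  NormedSpace.exp (((-Complex.I) * ((r * τ : ℝ) : ℂ)) • L)

lemma flowU_zero (τ : ℝ) : flowU L τ 0 = 1 := by
  have h : ((-Complex.I) * ((0 * τ : ℝ) : ℂ)) = 0 := by push_cast; ring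
  rw [flowU, h, zero_smul ℂ L, NormedSpace.exp_zero]

lemma gen_commute (c d : ℂ) : Commute (c • L) (d • L) := by
  unfold Commute SemiconjBy
  rw [smul_mul_smul_comm, smul_mul_smul_comm, mul_comm c d]

lemma flowU_mul (τ r t : ℝ) : flowU L τ r * flowU L τ t = flowU L τ (r + t) := by
  let +nondep : NormedAlgebra ℚ (EuclideanSpace ℂ (Fin N) →L[ℂ] EuclideanSpace ℂ (Fin N)) :=
    NormedAlgebra.restrictScalars ℚ ℂ _
  rw [flowU, flowU, flowU, ← NormedSpace.exp_add_of_commute (gen_commute L _ _)]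
  congr 1
  have h : (-Complex.I * ((r * τ : ℝ) : ℂ)) + (-Complex.I * ((t * τ : ℝ) : ℂ))
      = -Complex.I * (((r + t) * τ : ℝ) : ℂ) := by push_cast; ring
  rw [← h]
  exact (add_smul _ _ L).symm

lemma flowU_apply_apply (τ r t : ℝ) (x : EuclideanSpace ℂ (Fin N)) :
    flowU L τ r (flowU L τ t x) = flowU L τ (r + t) x := by
  rw [← flowU_mul L τ r t]; rfl

lemma flowU_star (hsa : IsSelfAdjoint L) (τ r : ℝ) :
    star (flowU L τ r) = flowU L τ (-r) := by
  rw [flowU, flowU, NormedSpace.star_exp]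
  congr 1
  rw [star_smul, hsa.star_eq]
  congr 1
  simp only [star_mul', star_neg, Complex.star_def, Complex.conj_I, Complex.conj_ofReal]
  push_cast
  ring

lemma flowU_comm_L (τ r : ℝ) (x : EuclideanSpace ℂ (Fin N)) :
    L (flowU L τ r x) = flowU L τ r (L x) := by
  have h : Commute (((-Complex.I) * ((r * τ : ℝ) : ℂ)) • L) L := by
    have := gen_commute L ((-Complex.I) * ((r * τ : ℝ) : ℂ)) 1
    simpa using this
  have h2 : L * flowU L τ r = flowU L τ r * L := h.exp_left.symm
  calc L (flowU L τ r x) = (L * flowU L τ r) x := rfl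
    _ = (flowU L τ r * L) x := by rw [h2]
    _ = flowU L τ r (L x) := rfl

lemma flowU_inner (hsa : IsSelfAdjoint L) (τ r : ℝ) (x y : EuclideanSpace ℂ (Fin N)) :
    ⟪flowU L τ r x, flowU L τ r y⟫ = ⟪x, y⟫ := by
  rw [← ContinuousLinearMap.adjoint_inner_right, ← ContinuousLinearMap.star_eq_adjoint,
    flowU_star L hsa]
  have : flowU L τ (-r) (flowU L τ r y) = y := by
    rw [flowU_apply_apply, neg_add_cancel, flowU_zero]; rfl
  rw [this]

end Aux

section Main

local notation "⟪" x ", " y "⟫" => @inner ℂ _ _ x y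

/-- Theorem 3.1 (energy part): a symplectic ESAV-RK step preserves the discrete modified
energy `Eⁿ = ⟨Lψⁿ, ψⁿ⟩ + (β/2)(qⁿ)² − (β/2)C₀`. -/
theorem ESAV_RK_energy_conservation {N : ℕ}
    (L : EuclideanSpace ℂ (Fin N) →L[ℂ] EuclideanSpace ℂ (Fin N))
    (hL : ∀ x y, pInner (L x) y = pInner x (L y))
    (β : ℝ) (C₀ : ℝ) (hC₀ : 0 < C₀) (τ : ℝ) (hτ : 0 < τ)
    (s : ℕ) (a : Fin s → Fin s → ℝ) (b : Fin s → ℝ)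
    (hsymp : ∀ i j, b i * a i j + b j * a j i = b i * b j)
    (c : Fin s → ℝ) (hc : ∀ i, c i = ∑ j, a i j)
    (ψn : EuclideanSpace ℂ (Fin N)) (qn : ℝ)
    (Ψ : Fin s → EuclideanSpace ℂ (Fin N)) (Q : Fin s → ℝ)
    (k : Fin s → EuclideanSpace ℂ (Fin N)) (l : Fin s → ℝ)
    (hk : ∀ i, k i = (-Complex.I * ((β * Q i / savRho C₀ (Ψ i) : ℝ) : ℂ)) • nlVec (Ψ i))
    (hl : ∀ i, l i = (2 / savRho C₀ (Ψ i)) *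
        (pInner ((-Complex.I) • L (Ψ i)) (nlVec (Ψ i))).re)
    (hΨ : ∀ i, Ψ i = NormedSpace.exp (((-Complex.I) * ((c i * τ : ℝ) : ℂ)) • L) ψn
        + τ • ∑ j, a i j •
            NormedSpace.exp ((Complex.I * (((c j - c i) * τ : ℝ) : ℂ)) • L) (k j))
    (hQ : ∀ i, Q i = qn + τ * ∑ j, a i j * l j)
    (ψn1 : EuclideanSpace ℂ (Fin N)) (qn1 : ℝ)
    (hψn1 : ψn1 = NormedSpace.exp (((-Complex.I) * ((τ : ℝ) : ℂ)) • L) ψn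
        + τ • ∑ i, b i •
            NormedSpace.exp (((-Complex.I) * (((1 - c i) * τ : ℝ) : ℂ)) • L) (k i))
    (hqn1 : qn1 = qn + τ * ∑ i, b i * l i) :
    (pInner (L ψn1) ψn1).re + (β / 2) * qn1 ^ 2
      = (pInner (L ψn) ψn).re + (β / 2) * qn ^ 2 := by
  classical
  -- symmetry of L
  have hsym : ∀ x y : EuclideanSpace ℂ (Fin N), ⟪L x, y⟫ = ⟪x, L y⟫ := by
    intro x y
    have h := hL y x
    rw [pInner_eq_inner, pInner_eq_inner] at h
    exact h.symm
  have hsa : IsSelfAdjoint L :=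
    ContinuousLinearMap.isSelfAdjoint_iff_isSymmetric.mpr (fun x y => hsym x y)
  -- transported stage slopes
  set v : Fin s → EuclideanSpace ℂ (Fin N) := fun i => flowU L τ (-(c i)) (k i) with hv
  have hkv : ∀ i, k i = flowU L τ (c i) (v i) := by
    intro i
    show k i = flowU L τ (c i) (flowU L τ (-(c i)) (k i))
    rw [flowU_apply_apply, add_neg_cancel, flowU_zero]
    rfl
  -- stage equations in transported form
  have hΨ' : ∀ i, Ψ i = flowU L τ (c i) (ψn + τ • ∑ j, a i j • v j) := by
    intro i
    have expand : flowU L τ (c i) (ψn + τ • ∑ j, a i j • v j)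
        = flowU L τ (c i) ψn + τ • ∑ j, a i j • flowU L τ (c i) (v j) := by
      simp only [real_smul_eq, map_add, map_smul, map_sum]
    rw [hΨ i, expand]
    congr 1
    congr 1
    refine Finset.sum_congr rfl fun j _ => ?_
    congr 1
    show _ = flowU L τ (c i) (flowU L τ (-(c j)) (k j))
    rw [flowU_apply_apply]
    have hsc : Complex.I * (((c j - c i) * τ : ℝ) : ℂ)
        = -Complex.I * (((c i + -(c j)) * τ : ℝ) : ℂ) := by push_cast; ring
    rw [flowU, ← hsc]
  have hψ1' : ψn1 = flowU L τ 1 (ψn + τ • ∑ i, b i • v i) := by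
    have expand : flowU L τ 1 (ψn + τ • ∑ i, b i • v i)
        = flowU L τ 1 ψn + τ • ∑ i, b i • flowU L τ 1 (v i) := by
      simp only [real_smul_eq, map_add, map_smul, map_sum]
    rw [hψn1, expand]
    congr 1
    · show NormedSpace.exp (((-Complex.I) * ((τ : ℝ) : ℂ)) • L) ψn = flowU L τ 1 ψn
      rw [flowU, one_mul]
    · congr 1
      refine Finset.sum_congr rfl fun i _ => ?_
      congr 1
      show _ = flowU L τ 1 (flowU L τ (-(c i)) (k i))
      rw [flowU_apply_apply]
      have h1 : (1 : ℝ) + -(c i) = 1 - c i := by ring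
      rw [h1]
      rfl
  -- quadratic form invariance and expansion
  have HA : (⟪ψn1, L ψn1⟫).re
      = (⟪ψn, L ψn⟫).re + 2 * τ * ∑ i, b i * (⟪v i, L ψn⟫).re
        + τ ^ 2 * ∑ i, ∑ j, b i * b j * (⟪v i, L (v j)⟫).re := by
    rw [hψ1', flowU_comm_L L τ 1, flowU_inner L hsa, expand_quad L hsym]
  have hB : ∀ i, (⟪k i, L (Ψ i)⟫).re
      = (⟪v i, L ψn⟫).re + τ * ∑ j, a i j * (⟪v i, L (v j)⟫).re := by
    intro i
    rw [hkv i, hΨ' i, flowU_comm_L, flowU_inner L hsa, expand_lin L]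
  have hC : ∀ i, β * Q i * l i = -2 * (⟪k i, L (Ψ i)⟫).re := by
    intro i
    rw [hk i, hl i, pInner_eq_inner, inner_smul_left, inner_smul_right]
    simp only [map_mul, map_neg, Complex.conj_I, Complex.conj_ofReal, neg_mul, neg_neg,
      Complex.mul_re, Complex.mul_im, Complex.I_re, Complex.I_im, Complex.ofReal_re,
      Complex.ofReal_im, Complex.neg_re, Complex.neg_im]
    ring
  -- the key per-stage identity
  have key : ∀ i, 2 * (⟪v i, L ψn⟫).re
      = -(β * qn * l i) - β * τ * ((∑ j, a i j * l j) * l i)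
        - 2 * τ * ∑ j, a i j * (⟪v i, L (v j)⟫).re := by
    intro i
    have h := hC i
    rw [hB i, hQ i] at h
    linear_combination h
  -- summed identity
  have e1 : 2 * ∑ i, b i * (⟪v i, L ψn⟫).re
      = -(β * qn * ∑ i, b i * l i)
        - β * τ * ∑ i, ∑ j, b i * a i j * (l i * l j)
        - 2 * τ * ∑ i, ∑ j, b i * a i j * (⟪v i, L (v j)⟫).re := by
    have step1 : 2 * ∑ i, b i * (⟪v i, L ψn⟫).re
        = ∑ i, b i * (2 * (⟪v i, L ψn⟫).re) := by
      rw [Finset.mul_sum]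
      exact Finset.sum_congr rfl fun i _ => by ring
    rw [step1]
    have step2 : ∀ i : Fin s, b i * (2 * (⟪v i, L ψn⟫).re)
        = -(β * qn * (b i * l i)) - β * τ * (∑ j, b i * a i j * (l i * l j))
          - 2 * τ * (∑ j, b i * a i j * (⟪v i, L (v j)⟫).re) := by
      intro i
      have c1 : b i * ((∑ j, a i j * l j) * l i) = ∑ j, b i * a i j * (l i * l j) := by
        rw [Finset.sum_mul, Finset.mul_sum]
        exact Finset.sum_congr rfl fun j _ => by ring
      have c2 : b i * (∑ j, a i j * (⟪v i, L (v j)⟫).re)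
          = ∑ j, b i * a i j * (⟪v i, L (v j)⟫).re := by
        rw [Finset.mul_sum]
        exact Finset.sum_congr rfl fun j _ => by ring
      rw [key i, ← c1, ← c2]
      ring
    rw [Finset.sum_congr rfl fun i _ => step2 i]
    rw [Finset.sum_sub_distrib, Finset.sum_sub_distrib]
    congr 1
    · congr 1
      · rw [Finset.mul_sum, ← Finset.sum_neg_distrib]
      · rw [← Finset.mul_sum]
    · rw [← Finset.mul_sum]
  -- symplectic sum identities
  have ID1 : ∑ i, ∑ j, b i * b j * (⟪v i, L (v j)⟫).re
      = 2 * ∑ i, ∑ j, b i * a i j * (⟪v i, L (v j)⟫).re := by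
    have h1 : ∀ i j, b i * b j * (⟪v i, L (v j)⟫).re
        = b i * a i j * (⟪v i, L (v j)⟫).re + b j * a j i * (⟪v i, L (v j)⟫).re := by
      intro i j; rw [← hsymp i j]; ring
    rw [Finset.sum_congr rfl fun i _ => Finset.sum_congr rfl fun j _ => h1 i j]
    have split : ∑ i, ∑ j, (b i * a i j * (⟪v i, L (v j)⟫).re
          + b j * a j i * (⟪v i, L (v j)⟫).re)
        = (∑ i, ∑ j, b i * a i j * (⟪v i, L (v j)⟫).re)
          + ∑ i, ∑ j, b j * a j i * (⟪v i, L (v j)⟫).re := by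
      rw [← Finset.sum_add_distrib]
      exact Finset.sum_congr rfl fun i _ => by rw [Finset.sum_add_distrib]
    rw [split]
    have h2 : ∑ i, ∑ j, b j * a j i * (⟪v i, L (v j)⟫).re
        = ∑ i, ∑ j, b i * a i j * (⟪v i, L (v j)⟫).re := by
      rw [Finset.sum_comm]
      exact Finset.sum_congr rfl fun i _ => Finset.sum_congr rfl fun j _ => by
        rw [re_swap L hsym (v j) (v i)]
    rw [h2]; ring
  have ID2 : (∑ i, b i * l i) ^ 2 = 2 * ∑ i, ∑ j, b i * a i j * (l i * l j) := by
    rw [sq, Finset.sum_mul_sum]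
    have h1 : ∀ i j : Fin s, b i * l i * (b j * l j)
        = b i * a i j * (l i * l j) + b j * a j i * (l i * l j) := by
      intro i j
      linear_combination (-(l i * l j)) * hsymp i j
    rw [Finset.sum_congr rfl fun i _ => Finset.sum_congr rfl fun j _ => h1 i j]
    have split : ∑ i, ∑ j, (b i * a i j * (l i * l j) + b j * a j i * (l i * l j))
        = (∑ i, ∑ j, b i * a i j * (l i * l j))
          + ∑ i, ∑ j, b j * a j i * (l i * l j) := by
      rw [← Finset.sum_add_distrib]
      exact Finset.sum_congr rfl fun i _ => by rw [Finset.sum_add_distrib]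
    rw [split]
    have h2 : ∑ i, ∑ j, b j * a j i * (l i * l j)
        = ∑ i, ∑ j, b i * a i j * (l i * l j) := by
      rw [Finset.sum_comm]
      exact Finset.sum_congr rfl fun i _ => Finset.sum_congr rfl fun j _ => by ring
    rw [h2]; ring
  -- assemble
  rw [pInner_eq_inner, pInner_eq_inner, HA, hqn1]
  linear_combination τ * e1 + τ ^ 2 * ID1 + (β * τ ^ 2 / 2) * ID2

end Main
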